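/- Let p be a prime and P(t) ∈ ℤ_p[t] a monic polynomial whose reduction modulo p equals Q̄(t)^m for some monic irreducible Q̄(t) ∈ 𝔽_p[t] and m ≥ 1. Then R = ℤ_p[t]/(P(t)) is a local ring, and every finite-length R-module G satisfies β₁^R(G) ≥ β₀^R(G). -/

import Mathlib

open Polynomial


lemma aux_le {R : Type*} [CommRing R] {n k : ℕ} (r : R) (hr : ∀ j : ℕ, r ^ j ≠ 0)
    (ψ : (Fin k → R) →ₗ[R] (Fin n → R))
    (h : ∀ i : Fin n, ∃ N : ℕ, r ^ N • (Pi.single i 1 : Fin n → R) ∈ LinearMap.range ψ) :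
    n ≤ k := by
  classical
  let S := Localization.Away r
  have hnt : Nontrivial S := by
    by_contra hc
    rw [not_nontrivial_iff_subsingleton] at hc
    have h1 : algebraMap R S 1 = 0 := Subsingleton.elim _ _
    obtain ⟨mm, hm⟩ := (IsLocalization.map_eq_zero_iff (Submonoid.powers r) S 1).mp h1
    obtain ⟨j, hj⟩ := mm.2
    refine hr j ?_
    have : (mm : R) = r ^ j := hj.symm
    rw [← this]
    simpa using hm
  let φ : R →+* S := algebraMap R S
  let B : Matrix (Fin n) (Fin k) S := Matrix.of fun i j => φ (ψ (Pi.single j 1) i)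
  let g : (Fin k → S) →ₗ[S] (Fin n → S) := B.mulVecLin
  have key : ∀ v : Fin k → R, g (fun j => φ (v j)) = fun i => φ (ψ v i) := by
    intro v
    funext i
    have hψ : ψ v = ∑ j, v j • ψ (fun i' => if j = i' then 1 else 0) :=
      LinearMap.pi_apply_eq_sum_univ ψ v
    have hsingle : ∀ j : Fin k, (fun i' => if j = i' then (1:R) else 0) = Pi.single j 1 := by
      intro j; funext i'; simp [Pi.single_apply, eq_comm]
    simp only [hsingle] at hψ
    simp only [g, Matrix.mulVecLin_apply, Matrix.mulVec, dotProduct, B, Matrix.of_apply]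
    rw [hψ]
    simp only [Finset.sum_apply, Pi.smul_apply, smul_eq_mul, map_sum, map_mul]
    exact Finset.sum_congr rfl fun j _ => mul_comm _ _
  have hmem : ∀ i : Fin n, (Pi.single i 1 : Fin n → S) ∈ LinearMap.range g := by
    intro i
    obtain ⟨N, v, hv⟩ := h i
    obtain ⟨u, hu⟩ := (IsLocalization.Away.algebraMap_isUnit (S := S) r).pow N
    refine ⟨(↑u⁻¹ : S) • fun j => φ (v j), ?_⟩
    rw [map_smul, key v]
    have hv' : (fun i' => φ (ψ v i')) = φ r ^ N • (Pi.single i 1 : Fin n → S) := by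
      funext i'
      rw [hv]
      simp [Pi.smul_apply, Pi.single_apply, smul_eq_mul, map_mul, map_pow, apply_ite φ]
    rw [hv', smul_smul, ← hu, Units.inv_mul, one_smul]
  have hsurj : Function.Surjective g := by
    rw [← LinearMap.range_eq_top, eq_top_iff, ← (Pi.basisFun S (Fin n)).span_eq,
      Submodule.span_le]
    rintro x ⟨i, rfl⟩
    simpa [Pi.basisFun_apply] using hmem i
  exact le_of_fin_surjective S g hsurj

lemma aux_tors {R : Type*} [CommRing R] [IsLocalRing R] {r : R} (hr : r ∈ nonunits R)
    {G : Type*} [AddCommGroup G] [Module R G] [IsArtinian R G] (g : G) :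
    ∃ N : ℕ, r ^ N • g = 0 := by
  obtain ⟨M', ⟨N, hN⟩, hmin⟩ := IsArtinian.set_has_minimal
    (Set.range fun N : ℕ => Submodule.span R {r ^ N • g}) ⟨_, 0, rfl⟩
  have hN' : Submodule.span R {r ^ N • g} = M' := hN
  refine ⟨N, ?_⟩
  have hle : Submodule.span R {r ^ (N + 1) • g} ≤ Submodule.span R {r ^ N • g} := by
    rw [Submodule.span_le, Set.singleton_subset_iff]
    exact Submodule.mem_span_singleton.mpr ⟨r, by rw [smul_smul, ← pow_succ']⟩
  have heq : Submodule.span R {r ^ (N + 1) • g} = Submodule.span R {r ^ N • g} := by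
    rw [hN'] at hle ⊢
    by_contra hne
    exact hmin _ ⟨N + 1, rfl⟩ (lt_of_le_of_ne hle hne)
  have hmem : r ^ N • g ∈ Submodule.span R {r ^ (N + 1) • g} := by
    rw [heq]; exact Submodule.mem_span_singleton_self _
  obtain ⟨c, hc⟩ := Submodule.mem_span_singleton.mp hmem
  have hcr : (1 - c * r) • (r ^ N • g) = 0 := by
    have h2 : (c * r) • (r ^ N • g) = c • (r ^ (N + 1) • g) := by
      rw [smul_smul, smul_smul, mul_assoc, ← pow_succ']
    rw [sub_smul, one_smul, h2, hc, sub_self]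
  have hunit : IsUnit (1 - c * r) := by
    by_contra hno
    have h1 : c * r ∈ nonunits R := fun hcu => hr (isUnit_of_mul_isUnit_right hcu)
    have := IsLocalRing.nonunits_add hno h1
    rw [sub_add_cancel] at this
    exact one_notMem_nonunits this
  obtain ⟨u, hu⟩ := hunit
  have hfin : ((u⁻¹ : Rˣ) : R) • ((1 - c * r) • (r ^ N • g)) = r ^ N • g := by
    rw [← hu, smul_smul, Units.inv_mul, one_smul]
  rw [← hfin, hcr, smul_zero]

lemma aux_localT {K : Type*} [Field K] (Q : K[X]) (hQirr : Irreducible Q)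
    (m : ℕ) (hm : 1 ≤ m) :
    IsLocalRing (K[X] ⧸ Ideal.span {Q ^ m}) := by
  have hm0 : m ≠ 0 := by omega
  have hQM : (Ideal.span {Q}).IsMaximal := PrincipalIdealRing.isMaximal_of_irreducible hQirr
  have hle : Ideal.span {Q ^ m} ≤ Ideal.span {Q} :=
    Ideal.span_singleton_le_span_singleton.mpr (dvd_pow_self Q hm0)
  have hne : Ideal.span {Q ^ m} ≠ ⊤ := by
    rw [Ne, Ideal.span_singleton_eq_top]
    exact fun h => hQirr.not_isUnit ((isUnit_pow_iff hm0).mp h)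
  haveI : Nontrivial (K[X] ⧸ Ideal.span {Q ^ m}) := Ideal.Quotient.nontrivial_iff.mpr hne
  have hunit : ∀ f : K[X], ¬ Q ∣ f → IsUnit (Ideal.Quotient.mk (Ideal.span {Q ^ m}) f) := by
    intro f hf
    have hfnot : f ∉ Ideal.span {Q} := fun h => hf (Ideal.mem_span_singleton.mp h)
    obtain ⟨y, i, hi, hyi⟩ := hQM.exists_inv hfnot
    obtain ⟨c, rfl⟩ := Ideal.mem_span_singleton.mp hi
    have hcop : IsCoprime Q f := ⟨c, y, by rw [add_comm] at hyi; linear_combination hyi⟩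
    obtain ⟨u, v, huv⟩ := (hcop.pow_left : IsCoprime (Q ^ m) f)
    refine IsUnit.of_mul_eq_one (Ideal.Quotient.mk _ v) ?_
    have := congrArg (Ideal.Quotient.mk (Ideal.span {Q ^ m})) huv
    rw [map_add, map_mul, map_mul, map_one] at this
    have hz : (Ideal.Quotient.mk (Ideal.span {Q ^ m})) (Q ^ m) = 0 :=
      Ideal.Quotient.eq_zero_iff_mem.mpr (Ideal.mem_span_singleton_self _)
    rw [hz, mul_zero, zero_add] at this
    rw [mul_comm]
    exact this
  apply IsLocalRing.of_nonunits_add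
  intro a b ha hb
  obtain ⟨f, rfl⟩ := Ideal.Quotient.mk_surjective a
  obtain ⟨g, rfl⟩ := Ideal.Quotient.mk_surjective b
  have hQf : Q ∣ f := by by_contra h; exact ha (hunit f h)
  have hQg : Q ∣ g := by by_contra h; exact hb (hunit g h)
  rw [← map_add]
  intro hsum
  obtain ⟨w, hw⟩ := hsum.exists_right_inv
  obtain ⟨w', rfl⟩ := Ideal.Quotient.mk_surjective w
  rw [← map_mul, ← map_one (Ideal.Quotient.mk (Ideal.span {Q ^ m})),
    Ideal.Quotient.mk_eq_mk_iff_sub_mem] at hw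
  have h1 : (1 : K[X]) ∈ Ideal.span {Q} := by
    have hmem := hle hw
    have h2 : (f + g) * w' ∈ Ideal.span {Q} :=
      Ideal.mem_span_singleton.mpr (Dvd.dvd.mul_right (dvd_add hQf hQg) w')
    have := Ideal.sub_mem _ h2 hmem
    simpa using this
  exact hQM.ne_top ((Ideal.eq_top_iff_one _).mpr h1)


lemma aux_localR (p : ℕ) [Fact p.Prime] (P : Polynomial ℤ_[p]) (hP : P.Monic)
    (Q : Polynomial (ZMod p)) (hQmonic : Q.Monic) (hQirr : Irreducible Q)
    (m : ℕ) (hm : 1 ≤ m) (hred : P.map PadicInt.toZMod = Q ^ m) :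
    IsLocalRing (Polynomial ℤ_[p] ⧸ Ideal.span {P}) ∧
      (p : Polynomial ℤ_[p] ⧸ Ideal.span {P}) ∈ nonunits (Polynomial ℤ_[p] ⧸ Ideal.span {P}) ∧
      ∀ j : ℕ, (p : Polynomial ℤ_[p] ⧸ Ideal.span {P}) ^ j ≠ 0 := by
  classical
  haveI : NeZero p := ⟨(Fact.out : p.Prime).ne_zero⟩
  set I : Ideal (Polynomial ℤ_[p]) := Ideal.span {P} with hI
  -- degrees
  have hdQ : 0 < Q.natDegree := hQirr.natDegree_pos
  have hdP : 0 < P.natDegree := by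
    have h1 : (P.map PadicInt.toZMod).natDegree = P.natDegree :=
      hP.natDegree_map PadicInt.toZMod
    rw [hred, natDegree_pow] at h1
    rw [← h1]
    exact Nat.mul_pos (by omega) hdQ
  have hPnu : ¬ IsUnit P := fun h => by
    have := natDegree_eq_zero_of_isUnit h; omega
  have hne : I ≠ ⊤ := by
    rw [hI, Ne, Ideal.span_singleton_eq_top]; exact hPnu
  haveI hRnt : Nontrivial (Polynomial ℤ_[p] ⧸ I) := Ideal.Quotient.nontrivial_iff.mpr hne
  -- powers of p nonzero
  have hpow : ∀ j : ℕ, (p : Polynomial ℤ_[p] ⧸ I) ^ j ≠ 0 := by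
    intro j hj
    have hmk : ((p : Polynomial ℤ_[p]) ^ j) ∈ I := by
      rw [← Ideal.Quotient.eq_zero_iff_mem, map_pow, map_natCast]
      exact hj
    rw [hI, Ideal.mem_span_singleton] at hmk
    have hc : ((p : Polynomial ℤ_[p]) ^ j) = C ((p : ℤ_[p]) ^ j) := by
      rw [map_pow, C_eq_natCast]
    rw [hc] at hmk
    have hcne : ((p : ℤ_[p]) ^ j) ≠ 0 :=
      pow_ne_zero _ (Nat.cast_ne_zero.mpr (Fact.out : p.Prime).ne_zero)
    have := Polynomial.natDegree_le_of_dvd hmk (by simpa using hcne)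
    simp only [Polynomial.natDegree_C] at this
    omega
  -- the reduction map
  have hsurj_toZMod : Function.Surjective (PadicInt.toZMod (p := p)) := by
    intro z
    obtain ⟨n, rfl⟩ := ZMod.natCast_zmod_surjective z
    exact ⟨(n : ℤ_[p]), map_natCast _ n⟩
  set J : Ideal (Polynomial (ZMod p)) := Ideal.span {Q ^ m} with hJ
  set red : Polynomial ℤ_[p] →+* Polynomial (ZMod p) ⧸ J :=
    (Ideal.Quotient.mk J).comp (Polynomial.mapRingHom PadicInt.toZMod) with hredm
  have hredmk : ∀ f : Polynomial ℤ_[p],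
      red f = Ideal.Quotient.mk J (f.map PadicInt.toZMod) := fun f => rfl
  have hredP : red P = 0 := by
    rw [hredmk, hred]
    exact Ideal.Quotient.eq_zero_iff_mem.mpr (Ideal.mem_span_singleton_self _)
  have hkerI : ∀ a ∈ I, red a = 0 := by
    intro a ha
    rw [hI, Ideal.mem_span_singleton] at ha
    obtain ⟨c, rfl⟩ := ha
    rw [map_mul, hredP, zero_mul]
  set φ : (Polynomial ℤ_[p] ⧸ I) →+* Polynomial (ZMod p) ⧸ J :=
    Ideal.Quotient.lift I red hkerI with hφ
  have hφsurj : Function.Surjective φ := by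
    intro t
    obtain ⟨f, rfl⟩ := Ideal.Quotient.mk_surjective t
    obtain ⟨g, hg⟩ := Polynomial.map_surjective _ hsurj_toZMod f
    exact ⟨Ideal.Quotient.mk I g, by rw [hφ, Ideal.Quotient.lift_mk, hredmk, hg]⟩
  -- kernel of red lands in span {p}
  have hker : ∀ f : Polynomial ℤ_[p], red f = 0 →
      (Ideal.Quotient.mk I f) ∈ Ideal.span {(p : Polynomial ℤ_[p] ⧸ I)} := by
    intro f hf
    have hmem : f.map PadicInt.toZMod ∈ J := by
      rw [← Ideal.Quotient.eq_zero_iff_mem, ← hredmk]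
      exact hf
    rw [hJ, Ideal.mem_span_singleton] at hmem
    obtain ⟨hbar, hhb⟩ := hmem
    obtain ⟨h, rfl⟩ := Polynomial.map_surjective _ hsurj_toZMod hbar
    have hzero : (f - P * h).map PadicInt.toZMod = 0 := by
      rw [Polynomial.map_sub, Polynomial.map_mul, hred, hhb, sub_self]
    have hdvd : C ((p : ℤ_[p])) ∣ f - P * h := by
      rw [Polynomial.C_dvd_iff_dvd_coeff]
      intro i
      have h4 : PadicInt.toZMod ((f - P * h).coeff i) = 0 := by
        rw [← Polynomial.coeff_map, hzero, Polynomial.coeff_zero]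
      have hker2 : (f - P * h).coeff i ∈ RingHom.ker (PadicInt.toZMod (p := p)) := h4
      rw [PadicInt.ker_toZMod, PadicInt.maximalIdeal_eq_span_p, Ideal.mem_span_singleton] at hker2
      exact hker2
    obtain ⟨g, hg⟩ := hdvd
    have hfg : f = P * h + C ((p : ℤ_[p])) * g := by linear_combination hg
    rw [Ideal.mem_span_singleton]
    refine ⟨Ideal.Quotient.mk I g, ?_⟩
    have h5 : Ideal.Quotient.mk I (P * h) = 0 := by
      have h5' : Ideal.Quotient.mk I P = 0 :=
        Ideal.Quotient.eq_zero_iff_mem.mpr (by rw [hI]; exact Ideal.mem_span_singleton_self _)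
      rw [map_mul, h5', zero_mul]
    have h6 : (Ideal.Quotient.mk I) (C ((p : ℤ_[p]))) = (p : Polynomial ℤ_[p] ⧸ I) := by
      rw [C_eq_natCast, map_natCast]
    rw [hfg, map_add, h5, zero_add, map_mul, h6]
  -- integrality and maximal ideals
  haveI : Module.Finite ℤ_[p] (Polynomial ℤ_[p] ⧸ I) :=
    Module.Finite.of_basis (AdjoinRoot.powerBasis' hP).basis
  haveI : Algebra.IsIntegral ℤ_[p] (Polynomial ℤ_[p] ⧸ I) := Algebra.IsIntegral.of_finite _ _
  have hpM : ∀ M : Ideal (Polynomial ℤ_[p] ⧸ I), M.IsMaximal →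
      (p : Polynomial ℤ_[p] ⧸ I) ∈ M := by
    intro M hM
    haveI := hM
    have h1 : (Ideal.comap (algebraMap ℤ_[p] (Polynomial ℤ_[p] ⧸ I)) M).IsMaximal :=
      Ideal.isMaximal_comap_of_isIntegral_of_isMaximal M
    have h2 : Ideal.comap (algebraMap ℤ_[p] (Polynomial ℤ_[p] ⧸ I)) M =
        IsLocalRing.maximalIdeal ℤ_[p] := IsLocalRing.eq_maximalIdeal h1
    have h3 : (p : ℤ_[p]) ∈ Ideal.comap (algebraMap ℤ_[p] (Polynomial ℤ_[p] ⧸ I)) M := by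
      rw [h2]
      exact PadicInt.p_nonunit
    rw [Ideal.mem_comap, map_natCast] at h3
    exact h3
  -- nonunits map to nonunits
  have hnu : ∀ x : Polynomial ℤ_[p] ⧸ I, ¬ IsUnit x → ¬ IsUnit (φ x) := by
    intro x hx hux
    obtain ⟨M, hM, hxM⟩ := exists_max_ideal_of_mem_nonunits hx
    obtain ⟨b, hb⟩ := hux.exists_right_inv
    obtain ⟨y, rfl⟩ := hφsurj b
    have h0 : φ (x * y - 1) = 0 := by rw [map_sub, map_mul, map_one, hb, sub_self]
    obtain ⟨f, hfx⟩ := Ideal.Quotient.mk_surjective (x * y - 1)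
    have hred0 : red f = 0 := by
      have : φ (Ideal.Quotient.mk I f) = red f := by rw [hφ, Ideal.Quotient.lift_mk]
      rw [← this, hfx]
      exact h0
    have hmem : x * y - 1 ∈ Ideal.span {(p : Polynomial ℤ_[p] ⧸ I)} := by
      rw [← hfx]; exact hker f hred0
    have hmemM : x * y - 1 ∈ M := by
      refine Ideal.span_le.mpr ?_ hmem
      simpa using hpM M hM
    have hone : (1 : Polynomial ℤ_[p] ⧸ I) ∈ M := by
      have := M.sub_mem (M.mul_mem_right y hxM) hmemM
      simpa using this
    exact hM.ne_top ((Ideal.eq_top_iff_one _).mpr hone)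
  haveI hTloc : IsLocalRing (Polynomial (ZMod p) ⧸ J) := aux_localT Q hQirr m hm
  have hploc : IsLocalRing (Polynomial ℤ_[p] ⧸ I) := by
    apply IsLocalRing.of_nonunits_add
    intro a b ha hb
    have h1 := hnu a ha
    have h2 := hnu b hb
    have h3 : φ a + φ b ∈ nonunits (Polynomial (ZMod p) ⧸ J) :=
      IsLocalRing.nonunits_add h1 h2
    intro hab
    rw [← map_add] at h3
    exact h3 (hab.map φ)
  refine ⟨hploc, ?_, hpow⟩
  obtain ⟨M, hM⟩ := Ideal.exists_maximal (Polynomial ℤ_[p] ⧸ I)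
  exact fun hu => hM.ne_top (Ideal.eq_top_of_isUnit_mem M (hpM M hM) hu)
lemma aux_range {M : Type*} (s : Finset M) :
    Set.range (fun i : Fin s.card => ((s.equivFin.symm i : M))) = ↑s := by
  ext x
  constructor
  · rintro ⟨i, rfl⟩; exact (s.equivFin.symm i).2
  · intro hx; exact ⟨s.equivFin ⟨x, hx⟩, by simp⟩

lemma aux_surj {R M : Type*} [CommRing R] [AddCommGroup M] [Module R M] (s : Finset M)
    (hs : Submodule.span R (s : Set M) = ⊤) :
    Function.Surjective
      (Fintype.linearCombination R (fun i : Fin s.card => ((s.equivFin.symm i : M)))) := by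
  rw [← LinearMap.range_eq_top, Fintype.range_linearCombination, aux_range, hs]



/-- The minimal number of generators of a module; over a local ring this is the zeroth
Betti number `β₀(G) = dim_κ(G/mG)` of a minimal free resolution. -/
noncomputable def minGens (R M : Type*) [Semiring R] [AddCommMonoid M] [Module R M] : ℕ :=
  sInf {k | ∃ s : Finset M, s.card = k ∧ Submodule.span R (s : Set M) = ⊤}

/-- The first Betti number of a module over a local ring: the minimal number of
generators of the kernel of a (minimal) surjection `R^{β₀(G)} → G`. -/
noncomputable def beta1 (R M : Type*) [CommRing R] [AddCommGroup M] [Module R M] : ℕ :=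
  sInf {k | ∃ F : (Fin (minGens R M) → R) →ₗ[R] M,
    Function.Surjective F ∧ minGens R (LinearMap.ker F) = k}

/-- Let `p` be a prime and `P(t) ∈ ℤ_p[t]` a monic polynomial whose
reduction modulo `p` equals `Q̄(t)^m` for some monic irreducible `Q̄(t) ∈ 𝔽_p[t]` and
`m ≥ 1`. Then `R = ℤ_p[t]/(P(t))` is a local ring, and every finite-length `R`-module
`G` satisfies `β₁^R(G) ≥ β₀^R(G)`. -/
theorem stmt_9 (p : ℕ) [Fact p.Prime]
    (P : Polynomial ℤ_[p]) (hP : P.Monic)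
    (Q : Polynomial (ZMod p)) (hQmonic : Q.Monic) (hQirr : Irreducible Q)
    (m : ℕ) (hm : 1 ≤ m) (hred : P.map PadicInt.toZMod = Q ^ m) :
    IsLocalRing (Polynomial ℤ_[p] ⧸ Ideal.span {P}) ∧
      ∀ (G : Type) [AddCommGroup G] [Module (Polynomial ℤ_[p] ⧸ Ideal.span {P}) G],
        IsFiniteLength (Polynomial ℤ_[p] ⧸ Ideal.span {P}) G →
          minGens (Polynomial ℤ_[p] ⧸ Ideal.span {P}) G ≤
            beta1 (Polynomial ℤ_[p] ⧸ Ideal.span {P}) G := by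
  classical
  obtain ⟨hloc, hpnu, hpow⟩ := aux_localR p P hP Q hQmonic hQirr m hm hred
  haveI := hloc
  refine ⟨hloc, ?_⟩
  intro G _ _ hfl
  obtain ⟨hnoe, hart⟩ := isFiniteLength_iff_isNoetherian_isArtinian.mp hfl
  haveI := hnoe
  haveI := hart
  set R := Polynomial ℤ_[p] ⧸ Ideal.span {P} with hR
  haveI : IsNoetherianRing R := inferInstance
  -- a minimal generating set for G
  obtain ⟨s0, hs0⟩ := IsNoetherian.noetherian (⊤ : Submodule R G)
  have hmg : minGens R G ∈
      {k | ∃ s : Finset G, s.card = k ∧ Submodule.span R (s : Set G) = ⊤} :=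
    Nat.sInf_mem ⟨s0.card, s0, rfl, hs0⟩
  obtain ⟨s, hscard, hsspan⟩ := hmg
  -- beta1's defining set is nonempty
  have hBne : {k | ∃ F : (Fin (minGens R G) → R) →ₗ[R] G,
      Function.Surjective F ∧ minGens R (LinearMap.ker F) = k}.Nonempty := by
    rw [← hscard]
    exact ⟨_, _, aux_surj s hsspan, rfl⟩
  have hb1 : beta1 R G ∈ {k | ∃ F : (Fin (minGens R G) → R) →ₗ[R] G,
      Function.Surjective F ∧ minGens R (LinearMap.ker F) = k} := Nat.sInf_mem hBne
  obtain ⟨F₀, hF₀s, hF₀k⟩ := hb1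
  rw [← hF₀k]
  -- a minimal generating set for the kernel
  have hKfg : (⊤ : Submodule R ↥(LinearMap.ker F₀)).FG := by
    rw [Submodule.fg_top]
    exact IsNoetherian.noetherian _
  obtain ⟨t0, ht0⟩ := hKfg
  have hmk : minGens R ↥(LinearMap.ker F₀) ∈
      {k | ∃ s : Finset ↥(LinearMap.ker F₀), s.card = k ∧
        Submodule.span R (s : Set ↥(LinearMap.ker F₀)) = ⊤} :=
    Nat.sInf_mem ⟨t0.card, t0, rfl, ht0⟩
  obtain ⟨t, htcard, htspan⟩ := hmk
  rw [← htcard]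
  -- the presentation map
  set w : Fin t.card → ↥(LinearMap.ker F₀) := fun i => t.equivFin.symm i with hw
  set ψ : (Fin t.card → R) →ₗ[R] (Fin (minGens R G) → R) :=
    (LinearMap.ker F₀).subtype ∘ₗ Fintype.linearCombination R w with hψ
  have hψrange : LinearMap.range ψ = LinearMap.ker F₀ := by
    rw [hψ, LinearMap.range_comp, Fintype.range_linearCombination, hw, aux_range, htspan]
    exact Submodule.map_subtype_top _
  refine aux_le (p : R) hpow ψ ?_
  intro i
  obtain ⟨N, hN⟩ := aux_tors hpnu (F₀ (Pi.single i 1))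
  refine ⟨N, ?_⟩
  rw [hψrange, LinearMap.mem_ker, map_smul]
  exact hN
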